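/- For every μ ∈ ℝ, every index m and every θ ∈ ℝ, with Z_m(θ) := e^{a(θ−θ_m)} e^{iθ}, one has the velocity-matching identity Re( i(a+i) e^{a(θ−θ_m)} e^{iθ} · conj( (W^R(θ)+W^L(θ))/2 − μ·Z_m(θ) ) ) = e^{2a(θ−θ_m)} · Im( (a/sinh(πA)) · Σ_{k=0}^{M−1} 𝒜_{mk} g_k + μ(a+i) ). Consequently the left-hand side vanishes for all θ and m if and only if Im( (a/sinh(πA)) Σ_k 𝒜_{mk} g_k + μ(a+i) ) = 0 for every m. -/

import Mathlib

/-- The complex constant `A := −2ai/(a+i)`. -/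
noncomputable def Aconst (a : ℝ) : ℂ := -2 * (a : ℂ) * Complex.I / ((a : ℂ) + Complex.I)

/-- The matrix coefficient
`𝒜_{mk} := e^{A(θ_k−θ_m)} · (e^{−πA)` if `k > m`, `cosh(πA)` if `k = m`, `e^{πA}` if `k < m)`. -/
noncomputable def Amat (a : ℝ) (M : ℕ) (θs : Fin M → ℝ) (m k : Fin M) : ℂ :=
  Complex.exp (Aconst a * ((θs k : ℂ) - (θs m : ℂ))) *
    (if m < k then Complex.exp (-(Real.pi : ℂ) * Aconst a)
     else if k = m then Complex.cosh ((Real.pi : ℂ) * Aconst a)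
     else Complex.exp ((Real.pi : ℂ) * Aconst a))

/-- The limit velocity profile on the `m`-th spiral from the right:
`W^R(θ) := e^{iθ} Σ_k (2a g_k/(e^{a(θ−θ_m)}(a−i))) ·
conj( exp((2a/(a+i))·a(θ−θ_m)) e^{A(θ_k−θ)} e^{2πχ_{k<m}A}/(1−e^{2πA}) )`. -/
noncomputable def WR (a : ℝ) (M : ℕ) (g θs : Fin M → ℝ) (m : Fin M) (θ : ℝ) : ℂ :=
  Complex.exp (Complex.I * (θ : ℂ)) * ∑ k : Fin M,
    (2 * (a : ℂ) * (g k : ℂ) /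
        ((Real.exp (a * (θ - θs m)) : ℂ) * ((a : ℂ) - Complex.I))) *
      (starRingEnd ℂ)
        (Complex.exp ((2 * (a : ℂ) / ((a : ℂ) + Complex.I)) * ((a * (θ - θs m) : ℝ) : ℂ)) *
          Complex.exp (Aconst a * ((θs k : ℂ) - (θ : ℂ))) *
          (Complex.exp (2 * (Real.pi : ℂ) * (if k < m then 1 else 0) * Aconst a) /
            (1 - Complex.exp (2 * (Real.pi : ℂ) * Aconst a))))

/-- The limit velocity profile on the `m`-th spiral from the left: as `WR` but with the
indicator of `k < m` replaced by the indicator of `k ≤ m`. -/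
noncomputable def WL (a : ℝ) (M : ℕ) (g θs : Fin M → ℝ) (m : Fin M) (θ : ℝ) : ℂ :=
  Complex.exp (Complex.I * (θ : ℂ)) * ∑ k : Fin M,
    (2 * (a : ℂ) * (g k : ℂ) /
        ((Real.exp (a * (θ - θs m)) : ℂ) * ((a : ℂ) - Complex.I))) *
      (starRingEnd ℂ)
        (Complex.exp ((2 * (a : ℂ) / ((a : ℂ) + Complex.I)) * ((a * (θ - θs m) : ℝ) : ℂ)) *
          Complex.exp (Aconst a * ((θs k : ℂ) - (θ : ℂ))) *
          (Complex.exp (2 * (Real.pi : ℂ) * (if k ≤ m then 1 else 0) * Aconst a) /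
            (1 - Complex.exp (2 * (Real.pi : ℂ) * Aconst a))))

open Complex in
lemma vm_term_eq (a gk θk θm θ : ℝ) (c : ℂ) :
    Complex.I * ((a:ℂ) + Complex.I) * ((Real.exp (a * (θ - θm)) : ℝ) : ℂ) *
      (starRingEnd ℂ) ((2 * (a:ℂ) * (gk:ℂ) /
          (((Real.exp (a * (θ - θm)) : ℝ) : ℂ) * ((a:ℂ) - Complex.I))) *
        (starRingEnd ℂ)
          (Complex.exp ((2 * (a:ℂ) / ((a:ℂ) + Complex.I)) * ((a * (θ - θm) : ℝ) : ℂ)) *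
            Complex.exp (Aconst a * ((θk:ℂ) - (θ:ℂ))) * c))
    = 2 * (a:ℂ) * Complex.I * (gk:ℂ) * ((Real.exp (2 * a * (θ - θm)) : ℝ) : ℂ) *
        Complex.exp (Aconst a * ((θk:ℂ) - (θm:ℂ))) * c := by
  have hai : ((a:ℂ) + Complex.I) ≠ 0 := by
    intro h; have := congrArg Complex.im h; simp at this
  have hE : (((Real.exp (a * (θ - θm)) : ℝ)) : ℂ) ≠ 0 :=
    Complex.ofReal_ne_zero.2 (Real.exp_ne_zero _)
  have hP : Complex.exp ((2 * (a:ℂ) / ((a:ℂ) + Complex.I)) * ((a * (θ - θm) : ℝ) : ℂ)) *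
      Complex.exp (Aconst a * ((θk:ℂ) - (θ:ℂ)))
      = ((Real.exp (2 * a * (θ - θm)) : ℝ) : ℂ) * Complex.exp (Aconst a * ((θk:ℂ) - (θm:ℂ))) := by
    rw [Complex.ofReal_exp, ← Complex.exp_add, ← Complex.exp_add]
    congr 1
    rw [Aconst]
    field_simp
    push_cast
    ring
  rw [map_mul, Complex.conj_conj]
  simp only [map_div₀, map_mul, map_sub, Complex.conj_ofReal, Complex.conj_I, map_ofNat,
    sub_neg_eq_add]
  rw [hP]
  field_simp

lemma vm_outer (c E x SR SL w : ℂ) (hx : x * (starRingEnd ℂ) x = 1)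
    (hE : (starRingEnd ℂ) E = E) (hw : (starRingEnd ℂ) w = w) :
    c * E * x * (starRingEnd ℂ) ((x * SR + x * SL) / 2 - w * (E * x)) =
      (c * E * (starRingEnd ℂ) SR + c * E * (starRingEnd ℂ) SL) / 2 - c * (E * E) * w := by
  simp only [map_sub, map_div₀, map_add, map_mul, map_ofNat]
  rw [hE, hw]
  linear_combination (c * E * (((starRingEnd ℂ) SR + (starRingEnd ℂ) SL) / 2 - w * E)) * hx

/-- With `Z_m(θ) := e^{a(θ−θ_m)}e^{iθ}`, for every `μ ∈ ℝ`, every index `m`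
and every `θ ∈ ℝ` one has the velocity-matching identity
`Re( i(a+i)e^{a(θ−θ_m)}e^{iθ} · conj((W^R(θ)+W^L(θ))/2 − μZ_m(θ)) )
  = e^{2a(θ−θ_m)} · Im( (a/sinh(πA)) Σ_k 𝒜_{mk}g_k + μ(a+i) )`.
Consequently the left-hand side vanishes for all `θ` and `m` if and only if
`Im( (a/sinh(πA)) Σ_k 𝒜_{mk}g_k + μ(a+i) ) = 0` for every `m`. -/
theorem velocity_matching (a : ℝ) (ha : 0 < a) (M : ℕ) (hM : 1 ≤ M)
    (g θs : Fin M → ℝ) (hθ : StrictMono θs)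
    (hθ0 : ∀ k : Fin M, θs k ∈ Set.Ico (0 : ℝ) (2 * Real.pi)) (μ : ℝ) :
    (∀ (m : Fin M) (θ : ℝ),
      (Complex.I * ((a : ℂ) + Complex.I) * (Real.exp (a * (θ - θs m)) : ℂ) *
          Complex.exp (Complex.I * (θ : ℂ)) *
          (starRingEnd ℂ) ((WR a M g θs m θ + WL a M g θs m θ) / 2 -
            (μ : ℂ) * ((Real.exp (a * (θ - θs m)) : ℂ) *
              Complex.exp (Complex.I * (θ : ℂ))))).re =
        Real.exp (2 * a * (θ - θs m)) *
          (((a : ℂ) / Complex.sinh ((Real.pi : ℂ) * Aconst a)) *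
              (∑ k : Fin M, Amat a M θs m k * (g k : ℂ)) +
            (μ : ℂ) * ((a : ℂ) + Complex.I)).im) ∧
    ((∀ (m : Fin M) (θ : ℝ),
        (Complex.I * ((a : ℂ) + Complex.I) * (Real.exp (a * (θ - θs m)) : ℂ) *
            Complex.exp (Complex.I * (θ : ℂ)) *
            (starRingEnd ℂ) ((WR a M g θs m θ + WL a M g θs m θ) / 2 -
              (μ : ℂ) * ((Real.exp (a * (θ - θs m)) : ℂ) *
                Complex.exp (Complex.I * (θ : ℂ))))).re = 0) ↔
      (∀ m : Fin M,
        (((a : ℂ) / Complex.sinh ((Real.pi : ℂ) * Aconst a)) *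
            (∑ k : Fin M, Amat a M θs m k * (g k : ℂ)) +
          (μ : ℂ) * ((a : ℂ) + Complex.I)).im = 0)) := by
  -- global preliminaries
  have hne : Complex.exp (2 * (Real.pi:ℂ) * Aconst a) ≠ 1 := by
    have hre : (Aconst a).re = -2*a/(a^2+1) := by
      have h : ((a:ℂ) + Complex.I) ≠ 0 := by
        intro h; have := congrArg Complex.im h; simp at this
      rw [Aconst, Complex.div_re]; simp [Complex.normSq_apply]; ring
    intro h
    have habs := congrArg (‖·‖) h
    rw [Complex.norm_exp] at habs
    simp at habs
    rcases (Or.inr habs : Real.pi = 0 ∨ _) with h1 | h2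
    · exact Real.pi_ne_zero h1
    · rw [hre] at h2
      have h3 : (0:ℝ) < a^2+1 := by positivity
      rcases div_eq_zero_iff.mp h2 with h4 | h4 <;> nlinarith
  set A := Aconst a with hA
  set p : ℂ := (Real.pi:ℂ) * A with hp
  have h2p : (2 * (Real.pi:ℂ) * A) = p + p := by rw [hp]; ring
  have hmp : (-(Real.pi:ℂ)*A) = -p := by rw [hp]; ring
  have hexp2 : Complex.exp (2 * (Real.pi:ℂ) * A) = Complex.exp p * Complex.exp p := by
    rw [h2p, Complex.exp_add]
  have hinv : Complex.exp p * Complex.exp (-p) = 1 := by rw [← Complex.exp_add]; simp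
  have hden : 1 - Complex.exp (2 * (Real.pi:ℂ) * A) ≠ 0 := sub_ne_zero.mpr (Ne.symm hne)
  have hs : Complex.sinh p ≠ 0 := by
    intro h
    apply hne
    rw [Complex.sinh, div_eq_zero_iff] at h
    rcases h with h | h
    · rw [sub_eq_zero] at h
      rw [hexp2]; nth_rewrite 2 [h]; exact hinv
    · norm_num at h
  have hgt : 1/(1 - Complex.exp (2 * (Real.pi:ℂ) * A)) + 1/(1 - Complex.exp (2 * (Real.pi:ℂ) * A))
      = -(Complex.exp (-(Real.pi:ℂ)*A))/Complex.sinh p := by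
    rw [hmp, ← add_div, div_eq_div_iff hden hs, hexp2, Complex.sinh]
    linear_combination (-(Complex.exp p)) * hinv
  have heq : 1/(1 - Complex.exp (2 * (Real.pi:ℂ) * A)) + Complex.exp (2 * (Real.pi:ℂ) * A)/(1 - Complex.exp (2 * (Real.pi:ℂ) * A))
      = -(Complex.cosh p)/Complex.sinh p := by
    rw [← add_div, div_eq_div_iff hden hs, hexp2, Complex.sinh, Complex.cosh]
    linear_combination (-(Complex.exp p)) * hinv
  have hlt : Complex.exp (2 * (Real.pi:ℂ) * A)/(1 - Complex.exp (2 * (Real.pi:ℂ) * A)) + Complex.exp (2 * (Real.pi:ℂ) * A)/(1 - Complex.exp (2 * (Real.pi:ℂ) * A))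
      = -(Complex.exp ((Real.pi:ℂ)*A))/Complex.sinh p := by
    rw [← add_div, div_eq_div_iff hden hs, hexp2, Complex.sinh, ← hp]
    linear_combination (-(Complex.exp p)) * hinv
  -- the key identity
  have key : ∀ (m : Fin M) (θ : ℝ),
      (Complex.I * ((a : ℂ) + Complex.I) * (Real.exp (a * (θ - θs m)) : ℂ) *
          Complex.exp (Complex.I * (θ : ℂ)) *
          (starRingEnd ℂ) ((WR a M g θs m θ + WL a M g θs m θ) / 2 -
            (μ : ℂ) * ((Real.exp (a * (θ - θs m)) : ℂ) *
              Complex.exp (Complex.I * (θ : ℂ))))).re =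
        Real.exp (2 * a * (θ - θs m)) *
          (((a : ℂ) / Complex.sinh ((Real.pi : ℂ) * Aconst a)) *
              (∑ k : Fin M, Amat a M θs m k * (g k : ℂ)) +
            (μ : ℂ) * ((a : ℂ) + Complex.I)).im := by
    intro m θ
    have hE2 : ((Real.exp (a * (θ - θs m)) : ℝ) : ℂ) * ((Real.exp (a * (θ - θs m)) : ℝ) : ℂ)
        = ((Real.exp (2 * a * (θ - θs m)) : ℝ) : ℂ) := by
      rw [← Complex.ofReal_mul, ← Real.exp_add]
      norm_num
      ring_nf
    have hx : Complex.exp (Complex.I * (θ:ℂ)) *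
        (starRingEnd ℂ) (Complex.exp (Complex.I * (θ:ℂ))) = 1 := by
      rw [← Complex.exp_conj]
      rw [← Complex.exp_add]
      simp
    -- main complex identity
    have hmain : Complex.I * ((a : ℂ) + Complex.I) * ((Real.exp (a * (θ - θs m)) : ℝ) : ℂ) *
          Complex.exp (Complex.I * (θ : ℂ)) *
          (starRingEnd ℂ) ((WR a M g θs m θ + WL a M g θs m θ) / 2 -
            (μ : ℂ) * (((Real.exp (a * (θ - θs m)) : ℝ) : ℂ) * Complex.exp (Complex.I * (θ : ℂ))))
        = -Complex.I * ((Real.exp (2 * a * (θ - θs m)) : ℝ) : ℂ) *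
            (((a : ℂ) / Complex.sinh ((Real.pi : ℂ) * Aconst a)) *
              (∑ k : Fin M, Amat a M θs m k * (g k : ℂ)) + (μ : ℂ) * ((a : ℂ) + Complex.I)) := by
      rw [WR, WL]
      rw [vm_outer _ _ _ _ _ _ hx (Complex.conj_ofReal _) (Complex.conj_ofReal _)]
      rw [map_sum, map_sum, Finset.mul_sum, Finset.mul_sum]
      simp only [vm_term_eq]
      rw [← Finset.sum_add_distrib, Finset.sum_div, mul_add]
      simp only [Finset.mul_sum, mul_add]
      rw [sub_eq_add_neg]
      congr 1
      · refine Finset.sum_congr rfl fun k _ => ?_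
        rw [Amat, ← hA, ← hp]
        rcases lt_trichotomy k m with hkm | hkm | hkm
        · simp only [if_pos hkm, if_pos hkm.le, if_neg (lt_asymm hkm), if_neg hkm.ne, mul_one]
          linear_combination ((a:ℂ) * Complex.I * ((g k : ℝ) : ℂ) *
            ((Real.exp (2 * a * (θ - θs m)) : ℝ) : ℂ) *
            Complex.exp (A * ((θs k : ℂ) - (θs m : ℂ)))) * hlt
        · subst hkm
          simp only [lt_irrefl, le_refl, ite_true, ite_false, if_true, if_false,
            mul_one, mul_zero, zero_mul, Complex.exp_zero]
          linear_combination ((a:ℂ) * Complex.I * ((g k : ℝ) : ℂ) *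
            ((Real.exp (2 * a * (θ - θs k)) : ℝ) : ℂ) *
            Complex.exp (A * ((θs k : ℂ) - (θs k : ℂ)))) * heq
        · simp only [if_pos hkm, if_neg (lt_asymm hkm), if_neg (not_le.mpr hkm),
            if_neg hkm.ne', mul_one, mul_zero, zero_mul, Complex.exp_zero]
          linear_combination ((a:ℂ) * Complex.I * ((g k : ℝ) : ℂ) *
            ((Real.exp (2 * a * (θ - θs m)) : ℝ) : ℂ) *
            Complex.exp (A * ((θs k : ℂ) - (θs m : ℂ)))) * hgt
      · rw [hE2]
        ring
    rw [hmain]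
    have : ∀ (r:ℝ) (z:ℂ), (-Complex.I * (r:ℂ) * z).re = r * z.im := by
      intro r z
      simp [Complex.mul_re, Complex.mul_im]
    exact this (Real.exp (2 * a * (θ - θs m))) _
  refine ⟨key, ?_, ?_⟩
  · intro h m
    have h2 := key m (θs m)
    rw [h m (θs m)] at h2
    simp only [sub_self, mul_zero, Real.exp_zero, one_mul] at h2
    exact h2.symm
  · intro h m θ
    rw [key m θ, h m, mul_zero]
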